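/- There is no real subalgebra R of Z (i.e. an ℝ-subspace of Z closed under the Zorn product) such that H ⊆ R ⊆ S and dim_ℝ R = 6. In other words, no six-dimensional real form of the sextonions contains the divisional quaternions. -/

import Mathlib

open Matrix

/-- 3-component complex vectors. -/
abbrev V3 := Fin 3 → ℂ

/-- The standard cross product on ℂ³. -/
def cross (A B : V3) : V3 := crossProduct A B

/-- The Zorn vector-matrix algebra over ℂ: elements x = (α⁺, A⁺, A⁻, α⁻). -/
abbrev Zorn := ℂ × V3 × V3 × ℂ

/-- The Zorn product
x·y = (α⁺β⁺ − ⟨A⁺,B⁻⟩, α⁺B⁺ + β⁻A⁺ + A⁻×B⁻, β⁺A⁻ + α⁻B⁻ + A⁺×B⁺, α⁻β⁻ − ⟨A⁻,B⁺⟩). -/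
noncomputable def zmul (x y : Zorn) : Zorn :=
  ( x.1 * y.1 - x.2.1 ⬝ᵥ y.2.2.1,
    x.1 • y.2.1 + y.2.2.2 • x.2.1 + cross x.2.2.1 y.2.2.1,
    y.1 • x.2.2.1 + x.2.2.2 • y.2.2.1 + cross x.2.1 y.2.1,
    x.2.2.2 * y.2.2.2 - x.2.2.1 ⬝ᵥ y.2.1 )

/-- The unit 1 = (1,0,0,1) of the Zorn algebra. -/
noncomputable def zunit : Zorn := (1, 0, 0, 1)

/-- Membership in the sextonion subspace S : A⁺₃ = 0 and A⁻₂ = 0. -/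
def inS (x : Zorn) : Prop := x.2.1 2 = 0 ∧ x.2.2.1 1 = 0

/-- The sextonion subspace S as a ℂ-submodule of the Zorn algebra. -/
noncomputable def Ssub : Submodule ℂ Zorn where
  carrier := {x | inS x}
  add_mem' := by
    rintro x y ⟨hx1, hx2⟩ ⟨hy1, hy2⟩
    exact ⟨by simp [inS, Prod.fst_add, Prod.snd_add, Pi.add_apply, hx1, hy1],
           by simp [inS, Prod.fst_add, Prod.snd_add, Pi.add_apply, hx2, hy2]⟩
  zero_mem' := ⟨rfl, rfl⟩
  smul_mem' := by
    rintro c x ⟨hx1, hx2⟩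
    exact ⟨by simp [inS, Prod.smul_fst, Prod.smul_snd, Pi.smul_apply, hx1],
           by simp [inS, Prod.smul_fst, Prod.smul_snd, Pi.smul_apply, hx2]⟩

/-- ρ⁺ = (1,0,0,0). -/
noncomputable def rhoP : Zorn := (1, 0, 0, 0)
/-- ρ⁻ = (0,0,0,1). -/
noncomputable def rhoM : Zorn := (0, 0, 0, 1)
/-- ε_k⁺ = (0, e_k, 0, 0). -/
noncomputable def epsP (k : Fin 3) : Zorn := (0, Pi.single k 1, 0, 0)
/-- ε_k⁻ = (0, 0, e_k, 0). -/
noncomputable def epsM (k : Fin 3) : Zorn := (0, 0, Pi.single k 1, 0)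

/-- Membership in the divisional quaternions H ⊂ Z:
H = {α₀ρ⁺ + conj(α₀)ρ⁻ + α₁ε₁⁺ + conj(α₁)ε₁⁻ : α₀, α₁ ∈ ℂ}. -/
noncomputable def inH (z : Zorn) : Prop :=
  ∃ a0 a1 : ℂ, z = a0 • rhoP + (starRingEnd ℂ a0) • rhoM
    + a1 • epsP 0 + (starRingEnd ℂ a1) • epsM 0


lemma key_quat {b0 b1 u v : ℂ} (hb : b0 ≠ 0 ∨ b1 ≠ 0)
    (hA : u * b0 - (starRingEnd ℂ v) * b1 = 0)
    (hB : v * b0 + (starRingEnd ℂ u) * b1 = 0) : u = 0 ∧ v = 0 := by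
  have h0 : (u * starRingEnd ℂ u + v * starRingEnd ℂ v) * b0 = 0 := by
    linear_combination (starRingEnd ℂ u) * hA + (starRingEnd ℂ v) * hB
  have h1 : (u * starRingEnd ℂ u + v * starRingEnd ℂ v) * b1 = 0 := by
    linear_combination (-v) * hA + u * hB
  have hSz : u * starRingEnd ℂ u + v * starRingEnd ℂ v = 0 := by
    rcases hb with h | h
    · exact (mul_eq_zero.mp h0).resolve_right h
    · exact (mul_eq_zero.mp h1).resolve_right h
  rw [Complex.mul_conj, Complex.mul_conj, ← Complex.ofReal_add, Complex.ofReal_eq_zero] at hSz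
  have h2 : Complex.normSq u = 0 ∧ Complex.normSq v = 0 := by
    constructor <;> nlinarith [Complex.normSq_nonneg u, Complex.normSq_nonneg v]
  exact ⟨Complex.normSq_eq_zero.mp h2.1, Complex.normSq_eq_zero.mp h2.2⟩

noncomputable def q0 : Zorn := (1, 0, 0, 1)
noncomputable def q1 : Zorn := (Complex.I, 0, 0, -Complex.I)
noncomputable def q2 : Zorn := (0, ![1,0,0], ![1,0,0], 0)
noncomputable def q3 : Zorn := (0, ![Complex.I,0,0], ![-Complex.I,0,0], 0)

lemma single_eq : (Pi.single 0 1 : V3) = ![1,0,0] := by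
  funext i; fin_cases i <;> simp

lemma inH_q0 : inH q0 := by
  refine ⟨1, 0, ?_⟩
  simp [q0, rhoP, rhoM, epsP, epsM, Prod.ext_iff]

lemma inH_q1 : inH q1 := by
  refine ⟨Complex.I, 0, ?_⟩
  simp [q1, rhoP, rhoM, epsP, epsM, Prod.ext_iff, Complex.conj_I]

lemma inH_q2 : inH q2 := by
  refine ⟨0, 1, ?_⟩
  simp [q2, rhoP, rhoM, epsP, epsM, Prod.ext_iff, single_eq]

lemma inH_q3 : inH q3 := by
  refine ⟨0, Complex.I, ?_⟩
  simp [q3, rhoP, rhoM, epsP, epsM, Prod.ext_iff, Complex.conj_I, single_eq]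

lemma conj_real_add_I (r s : ℝ) :
    starRingEnd ℂ ((r : ℂ) + (s : ℂ) * Complex.I) = (r : ℂ) - (s : ℂ) * Complex.I := by
  simp [Complex.conj_I]; ring

lemma eight_le {R : Submodule ℝ Zorn} (g : Fin 8 → Zorn) (hg : ∀ i, g i ∈ R)
    (hind : LinearIndependent ℝ g) : 8 ≤ Module.finrank ℝ R := by
  have h2 : LinearIndependent ℝ (fun i => (⟨g i, hg i⟩ : R)) :=
    LinearIndependent.of_comp R.subtype hind
  simpa using h2.fintype_card_le_finrank

/-- there is no real subalgebra R of Z (ℝ-subspace closed under the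
Zorn product) with H ⊆ R ⊆ S and dim_ℝ R = 6: no six-dimensional real form of the
sextonions contains the divisional quaternions. -/
theorem no_real_sextonion_form_contains_divisional_quaternions :
    ¬ ∃ R : Submodule ℝ Zorn,
      (∀ x ∈ R, ∀ y ∈ R, zmul x y ∈ R) ∧
      (∀ z : Zorn, inH z → z ∈ R) ∧
      (∀ x ∈ R, inS x) ∧
      Module.finrank ℝ R = 6 := by
  rintro ⟨R, hmul, hH, hSx, hdim⟩
  have hq0 : q0 ∈ R := hH _ inH_q0
  have hq1 : q1 ∈ R := hH _ inH_q1
  have hq2 : q2 ∈ R := hH _ inH_q2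
  have hq3 : q3 ∈ R := hH _ inH_q3
  by_cases hex : ∃ w ∈ R, w.2.1 1 ≠ 0 ∨ w.2.2.1 2 ≠ 0
  · obtain ⟨w, hwR, hbd⟩ := hex
    have hind : LinearIndependent ℝ ![q0, q1, q2, q3, w, zmul q1 w, zmul q2 w, zmul q3 w] := by
      rw [Fintype.linearIndependent_iff]
      intro c hc
      simp only [Fin.sum_univ_succ, Fin.sum_univ_zero, Matrix.cons_val_zero, Matrix.cons_val_succ,
        add_zero, show (Fin.succ 0 : Fin 8) = 1 from rfl,
        show ((Fin.succ 0).succ : Fin 8) = 2 from rfl,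
        show ((Fin.succ 0).succ.succ : Fin 8) = 3 from rfl,
        show ((Fin.succ 0).succ.succ.succ : Fin 8) = 4 from rfl,
        show ((Fin.succ 0).succ.succ.succ.succ : Fin 8) = 5 from rfl,
        show ((Fin.succ 0).succ.succ.succ.succ.succ : Fin 8) = 6 from rfl,
        show ((Fin.succ 0).succ.succ.succ.succ.succ.succ : Fin 8) = 7 from rfl] at hc
      have Eb := congrArg (fun z : Zorn => z.2.1 1) hc
      have Ed := congrArg (fun z : Zorn => z.2.2.1 2) hc
      simp only [q0, q1, q2, q3, zmul, cross, cross_apply, Prod.fst_add, Prod.snd_add,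
        Prod.smul_fst, Prod.smul_snd, Pi.add_apply, Pi.smul_apply, smul_eq_mul,
        Complex.real_smul, Matrix.cons_val_zero, Matrix.cons_val_one, Matrix.head_cons,
        Matrix.cons_val_two, Matrix.tail_cons, Pi.zero_apply, Prod.fst_zero, Prod.snd_zero,
        mul_zero, zero_mul, mul_one, one_mul, add_zero, zero_add, sub_zero, zero_sub, neg_zero,
        mul_neg, neg_mul] at Eb Ed
      have hconj : ∀ r s : ℝ, starRingEnd ℂ (↑r + ↑s * Complex.I) = ↑r - ↑s * Complex.I := by
        intro r s; simp [Complex.conj_I]; ring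
      have hA : ((c 4 : ℂ) + (c 5 : ℂ) * Complex.I) * w.2.1 1
          - (starRingEnd ℂ ((c 6 : ℂ) + (c 7 : ℂ) * Complex.I)) * w.2.2.1 2 = 0 := by
        rw [hconj]; linear_combination Eb
      have hB : ((c 6 : ℂ) + (c 7 : ℂ) * Complex.I) * w.2.1 1
          + (starRingEnd ℂ ((c 4 : ℂ) + (c 5 : ℂ) * Complex.I)) * w.2.2.1 2 = 0 := by
        rw [hconj]; linear_combination Ed
      obtain ⟨hu, hv⟩ := key_quat hbd hA hB
      have h4 : c 4 = 0 ∧ c 5 = 0 := by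
        simpa [Complex.ext_iff] using hu
      have h6 : c 6 = 0 ∧ c 7 = 0 := by
        simpa [Complex.ext_iff] using hv
      rw [h4.1, h4.2, h6.1, h6.2] at hc
      simp only [zero_smul, add_zero] at hc
      have E1 := congrArg (fun z : Zorn => z.1) hc
      have E2 := congrArg (fun z : Zorn => z.2.1 0) hc
      simp only [q0, q1, q2, q3, Prod.fst_add, Prod.snd_add, Prod.smul_fst, Prod.smul_snd,
        Pi.add_apply, Pi.smul_apply, smul_eq_mul, Complex.real_smul, Matrix.cons_val_zero,
        Pi.zero_apply, Prod.fst_zero, Prod.snd_zero, mul_zero, zero_mul, mul_one, one_mul,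
        add_zero, zero_add, mul_neg] at E1 E2
      have h0 : c 0 = 0 ∧ c 1 = 0 := by
        have : (c 0 : ℂ) + (c 1 : ℂ) * Complex.I = 0 := by linear_combination E1
        simpa [Complex.ext_iff] using this
      have h2 : c 2 = 0 ∧ c 3 = 0 := by
        have : (c 2 : ℂ) + (c 3 : ℂ) * Complex.I = 0 := by linear_combination E2
        simpa [Complex.ext_iff] using this
      intro i
      fin_cases i
      exacts [h0.1, h0.2, h2.1, h2.2, h4.1, h4.2, h6.1, h6.2]
    have h8 := eight_le _ (fun i => by
      fin_cases i <;>
        first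
        | exact hq0 | exact hq1 | exact hq2 | exact hq3 | exact hwR
        | exact hmul _ hq1 _ hwR | exact hmul _ hq2 _ hwR | exact hmul _ hq3 _ hwR) hind
    omega
  · push_neg at hex
    by_cases hex2 : ∃ w ∈ R, w.1 - starRingEnd ℂ w.2.2.2 ≠ 0 ∨
        w.2.1 0 - starRingEnd ℂ (w.2.2.1 0) ≠ 0
    · obtain ⟨w, hwR, hbb⟩ := hex2
      have hw1 := (hex w hwR).1
      have hw2 := (hex w hwR).2
      have hw3 := (hSx w hwR).1
      have hw4 := (hSx w hwR).2
      set β₀ := w.1 - starRingEnd ℂ w.2.2.2 with hb0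
      set β₁ := w.2.1 0 - starRingEnd ℂ (w.2.2.1 0) with hb1
      set x : Zorn := (β₀, ![β₁,0,0], ![-(starRingEnd ℂ β₁),0,0], -(starRingEnd ℂ β₀)) with hxd
      have hxR : x ∈ R := by
        have hh := hH _ ⟨w.1 + starRingEnd ℂ w.2.2.2, w.2.1 0 + starRingEnd ℂ (w.2.2.1 0), rfl⟩
        have hx2 : x = (2:ℝ) • w - ((w.1 + starRingEnd ℂ w.2.2.2) • rhoP
              + (starRingEnd ℂ (w.1 + starRingEnd ℂ w.2.2.2)) • rhoM
              + (w.2.1 0 + starRingEnd ℂ (w.2.2.1 0)) • epsP 0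
              + (starRingEnd ℂ (w.2.1 0 + starRingEnd ℂ (w.2.2.1 0))) • epsM 0) := by
          rw [hxd]
          refine Prod.ext ?_ (Prod.ext ?_ (Prod.ext ?_ ?_))
          · simp [rhoP, rhoM, epsP, epsM, hb0, Complex.real_smul]
            ring
          · funext i; fin_cases i <;>
              simp [rhoP, rhoM, epsP, epsM, hb1, hw1, hw3, Complex.real_smul, map_add,
                Complex.conj_conj] <;> ring
          · funext i; fin_cases i <;>
              simp [rhoP, rhoM, epsP, epsM, hb1, hw2, hw4, Complex.real_smul, map_add,
                Complex.conj_conj] <;> ring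
          · simp [rhoP, rhoM, epsP, epsM, hb0, Complex.real_smul, map_add, Complex.conj_conj]
            ring
        rw [hx2]
        exact R.sub_mem (R.smul_mem _ hwR) hh
      have hind : LinearIndependent ℝ ![q0, q1, q2, q3, x, zmul x q1, zmul x q2, zmul x q3] := by
        rw [Fintype.linearIndependent_iff]
        intro c hc
        simp only [Fin.sum_univ_succ, Fin.sum_univ_zero, Matrix.cons_val_zero, Matrix.cons_val_succ,
          add_zero, show (Fin.succ 0 : Fin 8) = 1 from rfl,
          show ((Fin.succ 0).succ : Fin 8) = 2 from rfl,
          show ((Fin.succ 0).succ.succ : Fin 8) = 3 from rfl,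
          show ((Fin.succ 0).succ.succ.succ : Fin 8) = 4 from rfl,
          show ((Fin.succ 0).succ.succ.succ.succ : Fin 8) = 5 from rfl,
          show ((Fin.succ 0).succ.succ.succ.succ.succ : Fin 8) = 6 from rfl,
          show ((Fin.succ 0).succ.succ.succ.succ.succ.succ : Fin 8) = 7 from rfl] at hc
        rw [hxd] at hc
        have E1 := congrArg (fun z : Zorn => z.1) hc
        have E2 := congrArg (fun z : Zorn => z.2.1 0) hc
        have E3 := congrArg (fun z : Zorn => z.2.2.1 0) hc
        have E4 := congrArg (fun z : Zorn => z.2.2.2) hc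
        simp only [q0, q1, q2, q3, zmul, cross, cross_apply, Prod.fst_add, Prod.snd_add,
          Prod.smul_fst, Prod.smul_snd, Pi.add_apply, Pi.smul_apply, smul_eq_mul,
          Complex.real_smul, Matrix.cons_val_zero, Matrix.cons_val_one, Matrix.head_cons,
          Matrix.cons_val_two, Matrix.tail_cons, Pi.zero_apply, Prod.fst_zero, Prod.snd_zero,
          Matrix.cons_dotProduct, Matrix.dotProduct_of_isEmpty,
          mul_zero, zero_mul, mul_one, one_mul, add_zero, zero_add, sub_zero, zero_sub, neg_zero,
          neg_neg, mul_neg, neg_mul, Matrix.vecHead] at E1 E2 E3 E4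
        have cE3 := congrArg (starRingEnd ℂ) E3
        have cE4 := congrArg (starRingEnd ℂ) E4
        simp only [map_add, map_sub, map_neg, _root_.map_mul, map_zero, Complex.conj_conj,
          Complex.conj_I, Complex.conj_ofReal, mul_neg, neg_mul, neg_neg] at cE3 cE4
        have hA : ((c 4 : ℂ) + (c 5 : ℂ) * Complex.I) * β₀
            - (starRingEnd ℂ ((c 6 : ℂ) + (c 7 : ℂ) * Complex.I)) * β₁ = 0 := by
          rw [conj_real_add_I]; linear_combination (E1 - cE4) / 2
        have hB : ((c 6 : ℂ) + (c 7 : ℂ) * Complex.I) * β₀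
            + (starRingEnd ℂ ((c 4 : ℂ) + (c 5 : ℂ) * Complex.I)) * β₁ = 0 := by
          rw [conj_real_add_I]; linear_combination (E2 - cE3) / 2
        obtain ⟨hu, hv⟩ := key_quat hbb hA hB
        have h4 : c 4 = 0 ∧ c 5 = 0 := by simpa [Complex.ext_iff] using hu
        have h6 : c 6 = 0 ∧ c 7 = 0 := by simpa [Complex.ext_iff] using hv
        have h0 : c 0 = 0 ∧ c 1 = 0 := by
          have : (c 0 : ℂ) + (c 1 : ℂ) * Complex.I = 0 := by linear_combination (E1 + cE4) / 2
          simpa [Complex.ext_iff] using this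
        have h2 : c 2 = 0 ∧ c 3 = 0 := by
          have : (c 2 : ℂ) + (c 3 : ℂ) * Complex.I = 0 := by linear_combination (E2 + cE3) / 2
          simpa [Complex.ext_iff] using this
        intro i
        fin_cases i
        exacts [h0.1, h0.2, h2.1, h2.2, h4.1, h4.2, h6.1, h6.2]
      have h8 := eight_le _ (fun i => by
        fin_cases i <;>
          first
          | exact hq0 | exact hq1 | exact hq2 | exact hq3 | exact hxR
          | exact hmul _ hxR _ hq1 | exact hmul _ hxR _ hq2 | exact hmul _ hxR _ hq3) hind
      omega
    · push_neg at hex2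
      let L : R →ₗ[ℝ] ℂ × ℂ :=
        { toFun := fun z => ((z : Zorn).1, (z : Zorn).2.1 0)
          map_add' := fun a b => by simp
          map_smul' := fun m a => by simp }
      have hker : ∀ z : R, L z = 0 → z = 0 := by
        intro z hz
        obtain ⟨hz1, hz2⟩ := Prod.ext_iff.mp hz
        simp only [L, LinearMap.coe_mk, AddHom.coe_mk, Prod.fst_zero, Prod.snd_zero] at hz1 hz2
        have e1 := (hex2 z z.2).1
        have e2 := (hex2 z z.2).2
        have f1 := (hex z z.2).1
        have f2 := (hex z z.2).2
        have g1 := (hSx z z.2).1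
        have g2 := (hSx z z.2).2
        rw [hz1] at e1
        rw [hz2] at e2
        have e1' : (z : Zorn).2.2.2 = 0 := by
          have : starRingEnd ℂ (z : Zorn).2.2.2 = 0 := by linear_combination -e1
          simpa using this
        have e2' : (z : Zorn).2.2.1 0 = 0 := by
          have : starRingEnd ℂ ((z : Zorn).2.2.1 0) = 0 := by linear_combination -e2
          simpa using this
        apply Subtype.ext
        refine Prod.ext hz1 (Prod.ext ?_ (Prod.ext ?_ e1'))
        · funext i; fin_cases i
          exacts [hz2, f1, g1]
        · funext i; fin_cases i
          exacts [e2', g2, f2]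
      have hinj : Function.Injective L :=
        LinearMap.ker_eq_bot.mp (LinearMap.ker_eq_bot'.mpr hker)
      have hle := LinearMap.finrank_le_finrank_of_injective hinj
      rw [hdim, Module.finrank_prod, Complex.finrank_real_complex] at hle
      omega
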